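/- For each m ≥ 1, the function x ↦ (-1)^m · g(x,a,m) = (m-1)!/x^m - (m-1)!/(x+a)^m - m!·a/(x+a)^(m+1) is strictly positive for all x > 0 and a > 0. -/
import Mathlib

open Real

lemma key_ineq (m : ℕ) (hm : 1 ≤ m) (a x : ℝ) (ha : 0 < a) (hx : 0 < x) :
    x ^ m * (x + (m + 1) * a) < (x + a) ^ (m + 1) := by
  induction m with
  | zero => omega
  | succ n ih =>
    rcases Nat.eq_or_lt_of_le hm with h | h
    · simp only [← h]
      push_cast
      nlinarith
    · have hn : 1 ≤ n := by omega
      have h1 := ih hn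
      have h2 : (0:ℝ) < x ^ n := pow_pos hx n
      have hxa : (0:ℝ) < x + a := by linarith
      have h3 := mul_lt_mul_of_pos_left h1 hxa
      have e2 : (x + a) * (x + a) ^ (n + 1) = (x + a) ^ (n + 2) := by ring
      have e1 : x ^ (n + 1) * (x + ((n:ℝ) + 1 + 1) * a) + x ^ n * (((n:ℝ) + 1) * a ^ 2)
          = (x + a) * (x ^ n * (x + ((n:ℝ) + 1) * a)) := by ring
      have hpos : 0 < x ^ n * (((n:ℝ) + 1) * a ^ 2) := by positivity
      push_cast
      linarith [e1 ▸ (e2 ▸ h3)]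

theorem stmt_7 (m : ℕ) (hm : 1 ≤ m) (a x : ℝ) (ha : 0 < a) (hx : 0 < x) :
    0 < ((m - 1).factorial : ℝ) / x ^ m - ((m - 1).factorial : ℝ) / (x + a) ^ m -
      (m.factorial : ℝ) * a / (x + a) ^ (m + 1) := by
  have hxa : 0 < x + a := by linarith
  have hfact : (m.factorial : ℝ) = m * (m - 1).factorial := by
    obtain ⟨k, rfl⟩ := Nat.exists_eq_add_of_le hm
    simp [Nat.factorial_succ, Nat.add_comm]
  have hA : (0:ℝ) < (m - 1).factorial := by exact_mod_cast (m-1).factorial_pos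
  have key := key_ineq m hm a x ha hx
  have hxm : (0:ℝ) < x ^ m := pow_pos hx m
  have hxam : (0:ℝ) < (x + a) ^ m := pow_pos hxa m
  have hxam1 : (0:ℝ) < (x + a) ^ (m + 1) := pow_pos hxa (m+1)
  have hbase : 0 < 1 / x ^ m - 1 / (x + a) ^ m - (m : ℝ) * a / (x + a) ^ (m + 1) := by
    rw [sub_sub, sub_pos, div_add_div _ _ (ne_of_gt hxam) (ne_of_gt hxam1),
      div_lt_div_iff₀ (by positivity) hxm]
    have e : (1 * (x + a) ^ (m + 1) + (x + a) ^ m * ((m:ℝ) * a)) * x ^ m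
        = (x + a) ^ m * (x ^ m * (x + ((m:ℝ) + 1) * a)) := by ring
    rw [e, one_mul]
    exact (mul_lt_mul_iff_right₀ hxam).2 key
  have e : ((m - 1).factorial : ℝ) / x ^ m - ((m - 1).factorial : ℝ) / (x + a) ^ m -
      (m.factorial : ℝ) * a / (x + a) ^ (m + 1)
      = ((m - 1).factorial : ℝ) * (1 / x ^ m - 1 / (x + a) ^ m - (m : ℝ) * a / (x + a) ^ (m + 1)) := by
    rw [hfact]; ring
  rw [e]
  exact mul_pos hA hbase
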